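/- Let a, b, c be complex numbers and let Q_n be the denominator of the n-th approximant of the continued fraction (-c)/a - c/(a+b) - c/(a+2b) - ... - c/(a+(n-1)b), defined by Q_0 = 1, Q_1 = a, and Q_{k+1} = (a+kb)Q_k - c Q_{k-1}. Then Q_n = \sum_{i=0}^{\lfloor n/2 \rfloor} \binom{n-i}{i} (-c)^i \prod_{j=i}^{n-1-i} (a + jb). -/

import Mathlib

noncomputable def Fq (a b c : ℂ) (n i : ℕ) : ℂ :=
  ((n - i).choose i : ℂ) * (-c)^i * ∏ j ∈ Finset.Icc i (n-1-i), (a + (j : ℂ) * b)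

lemma Fq_vanish (a b c : ℂ) (n i : ℕ) (h : n < 2*i) : Fq a b c n i = 0 := by
  have h1 : n - i < i := by omega
  simp [Fq, Nat.choose_eq_zero_of_lt h1]

lemma Fq_zero (a b c : ℂ) (k : ℕ) (hk : 1 ≤ k) :
    Fq a b c (k+1) 0 = (a + (k:ℂ)*b) * Fq a b c k 0 := by
  unfold Fq
  have h1 : k + 1 - 1 - 0 = k := by omega
  have h2 : k - 1 - 0 = k - 1 := by omega
  rw [h1, h2]
  have h3 : k = (k-1) + 1 := by omega
  rw [h3, Finset.prod_Icc_succ_top (by omega)]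
  simp only [Nat.choose_zero_right, ← h3]
  push_cast
  ring

lemma Fq_step (a b c : ℂ) (k i : ℕ) (hk : 2 ≤ k) (hi : 1 ≤ i) :
    Fq a b c (k+1) i = (a + (k:ℂ)*b) * Fq a b c k i - c * Fq a b c (k-1) (i-1) := by
  rcases lt_trichotomy (2*i) (k+1) with h | h | h
  · -- 2*i ≤ k
    have h2 : 2*i ≤ k := by omega
    unfold Fq
    have e1 : k + 1 - 1 - i = k - i := by omega
    have e2 : (k-1) - 1 - (i-1) = k - 1 - i := by omega
    rw [e1, e2]
    have e3 : k - i = (k - 1 - i) + 1 := by omega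
    have e4 : Finset.Icc (i-1) (k-1-i) = insert (i-1) (Finset.Icc i (k-1-i)) := by
      ext x; simp only [Finset.mem_Icc, Finset.mem_insert]; omega
    have hC : ((k+1-i).choose i : ℂ) = ((k-i).choose i : ℂ) + ((k-i).choose (i-1) : ℂ) := by
      have : k + 1 - i = (k - i) + 1 := by omega
      rw [this]
      have hi' : i = (i-1) + 1 := by omega
      rw [hi', Nat.choose_succ_succ' ] -- maybe wrong name
      push_cast; ring
    have hDn : (k-i).choose i * i = (k-i).choose (i-1) * (k - 2*i + 1) := by
      have hi' : i = (i-1) + 1 := by omega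
      have := Nat.choose_succ_right_eq (k-i) (i-1)
      rw [← hi'] at this
      rw [this]
      congr 1
      omega
    have hD : ((k-i).choose i : ℂ) * i = ((k-i).choose (i-1) : ℂ) * ((k:ℂ) - 2*i + 1) := by
      have h2' : 2*i ≤ k := h2
      have h6 := congrArg (Nat.cast : ℕ → ℂ) hDn
      push_cast at h6
      exact_mod_cast h6
    have cast1 : ((k-1-i+1 : ℕ) : ℂ) = (k:ℂ) - i := by
      have : k-1-i+1 = k-i := by omega
      rw [this, Nat.cast_sub (by omega)]
    have cast2 : ((i-1 : ℕ) : ℂ) = (i:ℂ) - 1 := by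
      rw [Nat.cast_sub hi, Nat.cast_one]
    have pow1 : (-c)^i = (-c)^(i-1) * (-c) := by
      conv_lhs => rw [show i = (i-1)+1 by omega]
      rw [pow_succ]
    have hsplit : (∏ j ∈ Finset.Icc i (k-i), (a + (j:ℂ)*b))
        = (∏ j ∈ Finset.Icc i (k-1-i), (a + (j:ℂ)*b)) * (a + ((k:ℂ)-(i:ℂ))*b) := by
      rw [e3, Finset.prod_Icc_succ_top (by omega), cast1]
    have e6 : k - 1 - (i-1) = k - i := by omega
    rw [hsplit, e6, e4, Finset.prod_insert (by simp [Finset.mem_Icc]; omega), hC, pow1, cast2]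
    linear_combination (-((-c)^(i-1) * (-c) * (∏ j ∈ Finset.Icc i (k-1-i), (a + (j:ℂ)*b)) * b)) * hD
  · -- 2*i = k+1
    have c1 : k + 1 - i = i := by omega
    have c2 : k - i < i := by omega
    have c3 : (k-1) - (i-1) = i - 1 := by omega
    unfold Fq
    rw [c1, c3, Nat.choose_self, Nat.choose_self, Nat.choose_eq_zero_of_lt c2]
    have p1 : Finset.Icc i (k+1-1-i) = ∅ := Finset.Icc_eq_empty_of_lt (by omega)
    have p2 : Finset.Icc (i-1) ((k-1)-1-(i-1)) = ∅ := Finset.Icc_eq_empty_of_lt (by omega)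
    rw [p1, p2]
    have : i = (i-1) + 1 := by omega
    rw [this, pow_succ]
    simp; ring
  · -- k+2 ≤ 2*i
    have c1 : k + 1 - i < i := by omega
    have c2 : k - i < i := by omega
    have c3 : (k-1) - (i-1) < i - 1 := by omega
    unfold Fq
    rw [Nat.choose_eq_zero_of_lt c1, Nat.choose_eq_zero_of_lt c2,
        Nat.choose_eq_zero_of_lt c3]
    simp

lemma Srec (a b c : ℂ) (k : ℕ) (hk : 2 ≤ k) :
    ∑ i ∈ Finset.range ((k+1)/2+1), Fq a b c (k+1) i
      = (a + (k:ℂ)*b) * (∑ i ∈ Finset.range (k/2+1), Fq a b c k i)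
        - c * ∑ i ∈ Finset.range ((k-1)/2+1), Fq a b c (k-1) i := by
  set R := k/2 + 1 with hR
  have ext1 : ∑ i ∈ Finset.range ((k+1)/2+1), Fq a b c (k+1) i
      = ∑ i ∈ Finset.range (R+1), Fq a b c (k+1) i := by
    apply Finset.sum_subset (Finset.range_subset_range.2 (by omega))
    intro i _ hi
    simp only [Finset.mem_range, not_lt] at hi
    exact Fq_vanish a b c (k+1) i (by omega)
  have ext3 : ∑ i ∈ Finset.range ((k-1)/2+1), Fq a b c (k-1) i
      = ∑ i ∈ Finset.range R, Fq a b c (k-1) i := by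
    apply Finset.sum_subset (Finset.range_subset_range.2 (by omega))
    intro i _ hi
    simp only [Finset.mem_range, not_lt] at hi
    exact Fq_vanish a b c (k-1) i (by omega)
  rw [ext1, ext3, Finset.sum_range_succ' (fun i => Fq a b c (k+1) i) R]
  have hstep : ∀ i : ℕ, Fq a b c (k+1) (i+1)
      = (a+(k:ℂ)*b) * Fq a b c k (i+1) - c * Fq a b c (k-1) i := by
    intro i
    have h := Fq_step a b c k (i+1) hk (by omega)
    simpa using h
  have hk2 : ∑ i ∈ Finset.range (k/2+1), Fq a b c k i
      = (∑ i ∈ Finset.range R, Fq a b c k (i+1)) + Fq a b c k 0 := by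
    have h0 : ∑ i ∈ Finset.range (R+1), Fq a b c k i
        = ∑ i ∈ Finset.range R, Fq a b c k i := by
      rw [Finset.sum_range_succ, Fq_vanish a b c k R (by omega), add_zero]
    calc ∑ i ∈ Finset.range (k/2+1), Fq a b c k i
        = ∑ i ∈ Finset.range R, Fq a b c k i := by rw [hR]
      _ = ∑ i ∈ Finset.range (R+1), Fq a b c k i := h0.symm
      _ = (∑ i ∈ Finset.range R, Fq a b c k (i+1)) + Fq a b c k 0 :=
          Finset.sum_range_succ' (fun i => Fq a b c k i) R
  simp only [hstep]
  rw [Finset.sum_sub_distrib, ← Finset.mul_sum, ← Finset.mul_sum, hk2,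
    Fq_zero a b c k (by omega)]
  ring

theorem stmt1 (a b c : ℂ) (Q : ℕ → ℂ)
    (hQ0 : Q 0 = 1) (hQ1 : Q 1 = a)
    (hrec : ∀ k : ℕ, 1 ≤ k → Q (k+1) = (a + (k : ℂ) * b) * Q k - c * Q (k-1)) :
    ∀ n : ℕ, 1 ≤ n →
      Q n = ∑ i ∈ Finset.range (n/2 + 1),
        ((n - i).choose i : ℂ) * (-c)^i * ∏ j ∈ Finset.Icc i (n-1-i), (a + (j : ℂ) * b) := by
  suffices H : ∀ n : ℕ, 1 ≤ n → Q n = ∑ i ∈ Finset.range (n/2 + 1), Fq a b c n i by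
    intro n hn
    simpa [Fq] using H n hn
  intro n
  induction n using Nat.strong_induction_on with
  | _ n ih =>
    intro hn
    match n, hn with
    | 1, _ =>
      rw [hQ1]
      simp [Fq, Finset.sum_range_one]
    | 2, _ =>
      have h2 := hrec 1 le_rfl
      rw [hQ0, hQ1] at h2
      rw [h2]
      have : Finset.Icc 0 1 = ({0, 1} : Finset ℕ) := by decide
      simp [Fq, Finset.sum_range_succ, this]
      ring
    | (k+3), _ =>
      have hk : 2 ≤ k + 2 := by omega
      have h1 := hrec (k+2) (by omega)
      have e1 : k + 2 - 1 = k + 1 := by omega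
      rw [e1] at h1
      have ih1 := ih (k+2) (by omega) (by omega)
      have ih2 := ih (k+1) (by omega) (by omega)
      rw [show k+3 = (k+2)+1 from rfl, h1, ih1, ih2]
      have hs := Srec a b c (k+2) hk
      have e2 : k + 2 - 1 = k + 1 := by omega
      rw [e2] at hs
      rw [← hs]
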